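/- If a word Λ in the alphabet {0, 1, y, y⁻¹} contains no potential cancellations, then advancing any single occurrence of y or y⁻¹ (via the rules y00→0y, y01→10y⁻¹, y1→11y, y⁻¹0→00y⁻¹, y⁻¹10→01y, y⁻¹11→1y⁻¹) results in a word with no potential cancellations. -/

import Mathlib

/-- The alphabet {0, 1, y, y⁻¹}. -/
inductive YSym : Type
  | b0 : YSym
  | b1 : YSym
  | yp : YSym
  | ym : YSym
deriving DecidableEq

/-- Whether a symbol is y or y⁻¹. -/
def isY : YSym → Bool
  | YSym.yp => true
  | YSym.ym => true
  | _ => false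

/-- The six advancement rules: y00→0y, y01→10y⁻¹, y1→11y,
y⁻¹0→00y⁻¹, y⁻¹10→01y, y⁻¹11→1y⁻¹. -/
inductive Rule : List YSym → List YSym → Prop
  | r1 : Rule [YSym.yp, YSym.b0, YSym.b0] [YSym.b0, YSym.yp]
  | r2 : Rule [YSym.yp, YSym.b0, YSym.b1] [YSym.b1, YSym.b0, YSym.ym]
  | r3 : Rule [YSym.yp, YSym.b1] [YSym.b1, YSym.b1, YSym.yp]
  | r4 : Rule [YSym.ym, YSym.b0] [YSym.b0, YSym.b0, YSym.ym]
  | r5 : Rule [YSym.ym, YSym.b1, YSym.b0] [YSym.b0, YSym.b1, YSym.yp]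
  | r6 : Rule [YSym.ym, YSym.b1, YSym.b1] [YSym.b1, YSym.ym]

/-- Advancing the i-th occurrence of y or y⁻¹ in a word (occurrences counted from 0;
the rules preserve the number and order of occurrences of y±, so occurrences can be
tracked through rewrites by their index). -/
def AdvanceAt (i : ℕ) (w w' : List YSym) : Prop :=
  ∃ u l r v, Rule l r ∧ w = u ++ l ++ v ∧ w' = u ++ r ++ v ∧ u.countP (fun a => isY a) = i

/-- The word contains an adjacent pair y y⁻¹ or y⁻¹ y. -/
def HasCancel (w : List YSym) : Prop :=
  ∃ u v, w = u ++ [YSym.yp, YSym.ym] ++ v ∨ w = u ++ [YSym.ym, YSym.yp] ++ v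

/-- The i-th occurrence of y± in w is a potential cancellation: repeatedly advancing
that occurrence eventually yields an adjacent yy⁻¹ or y⁻¹y. -/
def PotentialCancellation (i : ℕ) (w : List YSym) : Prop :=
  ∃ w', Relation.ReflTransGen (AdvanceAt i) w w' ∧ HasCancel w'

----------------- auxiliary development ------------------

open YSym

abbrev cY (L : List YSym) : ℕ := L.countP (fun a => isY a)

def CPair (a b : YSym) : Prop := (a = yp ∧ b = ym) ∨ (a = ym ∧ b = yp)

def AllB (L : List YSym) : Prop := ∀ x ∈ L, isY x = false

lemma cpair_isY {a b : YSym} (h : CPair a b) : isY a = true ∧ isY b = true := by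
  rcases h with ⟨rfl, rfl⟩ | ⟨rfl, rfl⟩ <;> simp [isY]

lemma eq_of_not_cpair {a b : YSym} (ha : isY a = true) (hb : isY b = true)
    (h : ¬ CPair a b) : a = b := by
  cases a <;> cases b <;> simp_all [isY, CPair]

lemma not_cpair_self (a : YSym) : ¬ CPair a a := by cases a <;> simp [CPair]

lemma isY_cases {a : YSym} (h : isY a = true) : a = yp ∨ a = ym := by
  cases a <;> simp_all [isY]

lemma notY_cases {a : YSym} (h : isY a = false) : a = b0 ∨ a = b1 := by
  cases a <;> simp_all [isY]

lemma cY_allB {L : List YSym} (h : AllB L) : cY L = 0 :=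
  List.countP_eq_zero.mpr (by intro a ha; simp [h a ha])

lemma hc_iff {w : List YSym} :
    HasCancel w ↔ ∃ p s a b, CPair a b ∧ w = p ++ a :: b :: s := by
  constructor
  · rintro ⟨u, v, h | h⟩
    · exact ⟨u, v, yp, ym, Or.inl ⟨rfl, rfl⟩, by simpa using h⟩
    · exact ⟨u, v, ym, yp, Or.inr ⟨rfl, rfl⟩, by simpa using h⟩
  · rintro ⟨p, s, a, b, (⟨rfl, rfl⟩ | ⟨rfl, rfl⟩), rfl⟩
    · exact ⟨p, s, Or.inl (by simp)⟩
    · exact ⟨p, s, Or.inr (by simp)⟩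

lemma hc_of_cpair {a b : YSym} (h : CPair a b) (p t : List YSym) :
    HasCancel (p ++ a :: b :: t) := hc_iff.mpr ⟨p, t, a, b, h, rfl⟩

lemma hc_mono_left {A B : List YSym} (h : HasCancel A) : HasCancel (A ++ B) := by
  obtain ⟨p, s, a, b, hab, rfl⟩ := hc_iff.mp h
  exact hc_iff.mpr ⟨p, s ++ B, a, b, hab, by simp⟩

lemma hc_mono_right {A B : List YSym} (h : HasCancel B) : HasCancel (A ++ B) := by
  obtain ⟨p, s, a, b, hab, rfl⟩ := hc_iff.mp h
  exact hc_iff.mpr ⟨A ++ p, s, a, b, hab, by simp⟩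

lemma hc_split {A B : List YSym} (h : HasCancel (A ++ B)) :
    HasCancel A ∨ HasCancel B ∨
      ∃ a b A' B', CPair a b ∧ A = A' ++ [a] ∧ B = b :: B' := by
  obtain ⟨p, s, a, b, hab, heq⟩ := hc_iff.mp h
  rcases List.append_eq_append_iff.mp heq with ⟨t, ht1, ht2⟩ | ⟨t, ht1, ht2⟩
  · -- p = A ++ t, B = t ++ a :: b :: s
    exact Or.inr (Or.inl (hc_iff.mpr ⟨t, s, a, b, hab, ht2⟩))
  · -- A = p ++ t, a :: b :: s = t ++ B
    match t, ht2 with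
    | [], ht2 => exact Or.inr (Or.inl (hc_iff.mpr ⟨[], s, a, b, hab, by simpa using ht2.symm⟩))
    | [x], ht2 =>
      obtain ⟨hx, hB⟩ : a = x ∧ b :: s = B := by simpa using ht2
      exact Or.inr (Or.inr ⟨a, b, p, s, hab, by rw [ht1, ← hx], hB.symm⟩)
    | x :: y :: t', ht2 =>
      obtain ⟨hx, hy, hs⟩ : a = x ∧ b = y ∧ s = t' ++ B := by
        have := ht2; simp at this; exact ⟨this.1, this.2.1, this.2.2⟩
      exact Or.inl (hc_iff.mpr ⟨p, t', a, b, hab, by simp [ht1, ← hx, ← hy]⟩)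

lemma no_hc_allB {L : List YSym} (h : AllB L) : ¬ HasCancel L := by
  intro hc
  obtain ⟨p, s, a, b, hab, rfl⟩ := hc_iff.mp hc
  have := h a (by simp)
  simp [(cpair_isY hab).1] at this

lemma no_hc_single (x : YSym) : ¬ HasCancel [x] := by
  intro hc
  obtain ⟨p, s, a, b, hab, heq⟩ := hc_iff.mp hc
  cases p <;> simp_all

lemma allB_append {A B : List YSym} (hA : AllB A) (hB : AllB B) : AllB (A ++ B) := by
  intro x hx; rcases List.mem_append.mp hx with h | h
  · exact hA x h
  · exact hB x h

lemma allB_of_append_left {A B : List YSym} (h : AllB (A ++ B)) : AllB A :=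
  fun x hx => h x (by simp [hx])

lemma allB_of_append_right {A B : List YSym} (h : AllB (A ++ B)) : AllB B :=
  fun x hx => h x (by simp [hx])

lemma allB_cons {a : YSym} {L : List YSym} : AllB (a :: L) ↔ isY a = false ∧ AllB L := by
  simp [AllB]

----------------- the transducer ------------------

/-- Full-consumption runs of an occurrence of y± over a bit string:
`YTrans σ C e τ` means a y of sign `σ` advances over (consumes) exactly `C`,
emitting `e` to its left and ending with sign `τ`. -/
inductive YTrans : YSym → List YSym → List YSym → YSym → Prop
  | nil (σ : YSym) : YTrans σ [] [] σ
  | t1 {t e τ} : YTrans yp t e τ → YTrans yp (b0 :: b0 :: t) (b0 :: e) τ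
  | t2 {t e τ} : YTrans ym t e τ → YTrans yp (b0 :: b1 :: t) (b1 :: b0 :: e) τ
  | t3 {t e τ} : YTrans yp t e τ → YTrans yp (b1 :: t) (b1 :: b1 :: e) τ
  | t4 {t e τ} : YTrans ym t e τ → YTrans ym (b0 :: t) (b0 :: b0 :: e) τ
  | t5 {t e τ} : YTrans yp t e τ → YTrans ym (b1 :: b0 :: t) (b0 :: b1 :: e) τ
  | t6 {t e τ} : YTrans ym t e τ → YTrans ym (b1 :: b1 :: t) (b1 :: e) τ

def run : YSym → List YSym → Option (List YSym × YSym)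
  | σ, [] => some ([], σ)
  | yp, b0 :: b0 :: t => (run yp t).map (fun p => (b0 :: p.1, p.2))
  | yp, b0 :: b1 :: t => (run ym t).map (fun p => (b1 :: b0 :: p.1, p.2))
  | yp, b1 :: t => (run yp t).map (fun p => (b1 :: b1 :: p.1, p.2))
  | ym, b0 :: t => (run ym t).map (fun p => (b0 :: b0 :: p.1, p.2))
  | ym, b1 :: b0 :: t => (run yp t).map (fun p => (b0 :: b1 :: p.1, p.2))
  | ym, b1 :: b1 :: t => (run ym t).map (fun p => (b1 :: p.1, p.2))
  | _, _ => none

lemma trans_run {σ C e τ} (h : YTrans σ C e τ) : run σ C = some (e, τ) := by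
  induction h with
  | nil σ => cases σ <;> rfl
  | t1 _ ih => simp [run, ih]
  | t2 _ ih => simp [run, ih]
  | t3 _ ih => simp [run, ih]
  | t4 _ ih => simp [run, ih]
  | t5 _ ih => simp [run, ih]
  | t6 _ ih => simp [run, ih]

lemma trans_comp {σ C₁ e₁ τ C₂ e₂ ρ} (h₁ : YTrans σ C₁ e₁ τ) (h₂ : YTrans τ C₂ e₂ ρ) :
    YTrans σ (C₁ ++ C₂) (e₁ ++ e₂) ρ := by
  induction h₁ with
  | nil σ => simpa only [List.nil_append] using h₂
  | t1 _ ih => exact YTrans.t1 (ih h₂)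
  | t2 _ ih => exact YTrans.t2 (ih h₂)
  | t3 _ ih => exact YTrans.t3 (ih h₂)
  | t4 _ ih => exact YTrans.t4 (ih h₂)
  | t5 _ ih => exact YTrans.t5 (ih h₂)
  | t6 _ ih => exact YTrans.t6 (ih h₂)

lemma trans_isY {σ C e τ} (h : YTrans σ C e τ) (hσ : isY σ = true) : isY τ = true := by
  induction h with
  | nil σ => exact hσ
  | t1 _ ih => exact ih rfl
  | t2 _ ih => exact ih rfl
  | t3 _ ih => exact ih rfl
  | t4 _ ih => exact ih rfl
  | t5 _ ih => exact ih rfl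
  | t6 _ ih => exact ih rfl

lemma trans_allB {σ C e τ} (h : YTrans σ C e τ) : AllB C ∧ AllB e := by
  induction h with
  | nil σ => exact ⟨by intro x hx; simp at hx, by intro x hx; simp at hx⟩
  | t1 _ ih => simpa [allB_cons, isY] using ih
  | t2 _ ih => simpa [allB_cons, isY] using ih
  | t3 _ ih => simpa [allB_cons, isY] using ih
  | t4 _ ih => simpa [allB_cons, isY] using ih
  | t5 _ ih => simpa [allB_cons, isY] using ih
  | t6 _ ih => simpa [allB_cons, isY] using ih

lemma trans_e_nil {σ C τ} (h : YTrans σ C [] τ) : C = [] ∧ τ = σ := by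
  cases h; exact ⟨rfl, rfl⟩

lemma trans_ne {σ C e τ} (h : YTrans σ C e τ) (hC : C ≠ []) : e ≠ [] := by
  intro he; subst he; exact hC (trans_e_nil h).1

/-- splitting a run at an arbitrary point of the consumed string, with at most
one pending symbol. -/
lemma trans_split {σ C e τ} (h : YTrans σ C e τ) :
    ∀ A B, C = A ++ B →
    ∃ A₁ A₂ e₁ ρ e₂, A = A₁ ++ A₂ ∧ A₂.length ≤ 1 ∧ YTrans σ A₁ e₁ ρ ∧
      YTrans ρ (A₂ ++ B) e₂ τ ∧ e = e₁ ++ e₂ := by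
  induction h with
  | nil σ =>
    intro A B hAB
    obtain ⟨rfl, rfl⟩ : A = [] ∧ B = [] := List.append_eq_nil_iff.mp hAB.symm
    exact ⟨[], [], [], σ, [], rfl, by simp, YTrans.nil σ, YTrans.nil σ, rfl⟩
  | t1 h ih =>
    intro A B hAB
    match A, hAB with
    | [], hAB => exact ⟨[], [], [], _, _, rfl, by simp, YTrans.nil _, by rw [← hAB]; exact YTrans.t1 h, rfl⟩
    | [x], hAB =>
      obtain ⟨rfl, hB⟩ : b0 = x ∧ b0 :: _ = B := by simpa using hAB
      exact ⟨[], [b0], [], _, _, rfl, by simp, YTrans.nil _, by rw [← hB]; exact YTrans.t1 h, rfl⟩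
    | x :: y :: A', hAB =>
      obtain ⟨rfl, rfl, hC⟩ : b0 = x ∧ b0 = y ∧ _ = A' ++ B := by simpa using hAB
      obtain ⟨A₁, A₂, e₁, ρ, e₂, h1, h2, h3, h4, h5⟩ := ih A' B hC
      exact ⟨b0 :: b0 :: A₁, A₂, b0 :: e₁, ρ, e₂, by simp [h1], h2, YTrans.t1 h3, h4, by simp [h5]⟩
  | t2 h ih =>
    intro A B hAB
    match A, hAB with
    | [], hAB => exact ⟨[], [], [], _, _, rfl, by simp, YTrans.nil _, by rw [← hAB]; exact YTrans.t2 h, rfl⟩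
    | [x], hAB =>
      obtain ⟨rfl, hB⟩ : b0 = x ∧ b1 :: _ = B := by simpa using hAB
      exact ⟨[], [b0], [], _, _, rfl, by simp, YTrans.nil _, by rw [← hB]; exact YTrans.t2 h, rfl⟩
    | x :: y :: A', hAB =>
      obtain ⟨rfl, rfl, hC⟩ : b0 = x ∧ b1 = y ∧ _ = A' ++ B := by simpa using hAB
      obtain ⟨A₁, A₂, e₁, ρ, e₂, h1, h2, h3, h4, h5⟩ := ih A' B hC
      exact ⟨b0 :: b1 :: A₁, A₂, b1 :: b0 :: e₁, ρ, e₂, by simp [h1], h2, YTrans.t2 h3, h4, by simp [h5]⟩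
  | t3 h ih =>
    intro A B hAB
    match A, hAB with
    | [], hAB => exact ⟨[], [], [], _, _, rfl, by simp, YTrans.nil _, by rw [← hAB]; exact YTrans.t3 h, rfl⟩
    | x :: A', hAB =>
      obtain ⟨rfl, hC⟩ : b1 = x ∧ _ = A' ++ B := by simpa using hAB
      obtain ⟨A₁, A₂, e₁, ρ, e₂, h1, h2, h3, h4, h5⟩ := ih A' B hC
      exact ⟨b1 :: A₁, A₂, b1 :: b1 :: e₁, ρ, e₂, by simp [h1], h2, YTrans.t3 h3, h4, by simp [h5]⟩
  | t4 h ih =>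
    intro A B hAB
    match A, hAB with
    | [], hAB => exact ⟨[], [], [], _, _, rfl, by simp, YTrans.nil _, by rw [← hAB]; exact YTrans.t4 h, rfl⟩
    | x :: A', hAB =>
      obtain ⟨rfl, hC⟩ : b0 = x ∧ _ = A' ++ B := by simpa using hAB
      obtain ⟨A₁, A₂, e₁, ρ, e₂, h1, h2, h3, h4, h5⟩ := ih A' B hC
      exact ⟨b0 :: A₁, A₂, b0 :: b0 :: e₁, ρ, e₂, by simp [h1], h2, YTrans.t4 h3, h4, by simp [h5]⟩
  | t5 h ih =>
    intro A B hAB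
    match A, hAB with
    | [], hAB => exact ⟨[], [], [], _, _, rfl, by simp, YTrans.nil _, by rw [← hAB]; exact YTrans.t5 h, rfl⟩
    | [x], hAB =>
      obtain ⟨rfl, hB⟩ : b1 = x ∧ b0 :: _ = B := by simpa using hAB
      exact ⟨[], [b1], [], _, _, rfl, by simp, YTrans.nil _, by rw [← hB]; exact YTrans.t5 h, rfl⟩
    | x :: y :: A', hAB =>
      obtain ⟨rfl, rfl, hC⟩ : b1 = x ∧ b0 = y ∧ _ = A' ++ B := by simpa using hAB
      obtain ⟨A₁, A₂, e₁, ρ, e₂, h1, h2, h3, h4, h5⟩ := ih A' B hC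
      exact ⟨b1 :: b0 :: A₁, A₂, b0 :: b1 :: e₁, ρ, e₂, by simp [h1], h2, YTrans.t5 h3, h4, by simp [h5]⟩
  | t6 h ih =>
    intro A B hAB
    match A, hAB with
    | [], hAB => exact ⟨[], [], [], _, _, rfl, by simp, YTrans.nil _, by rw [← hAB]; exact YTrans.t6 h, rfl⟩
    | [x], hAB =>
      obtain ⟨rfl, hB⟩ : b1 = x ∧ b1 :: _ = B := by simpa using hAB
      exact ⟨[], [b1], [], _, _, rfl, by simp, YTrans.nil _, by rw [← hB]; exact YTrans.t6 h, rfl⟩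
    | x :: y :: A', hAB =>
      obtain ⟨rfl, rfl, hC⟩ : b1 = x ∧ b1 = y ∧ _ = A' ++ B := by simpa using hAB
      obtain ⟨A₁, A₂, e₁, ρ, e₂, h1, h2, h3, h4, h5⟩ := ih A' B hC
      exact ⟨b1 :: b1 :: A₁, A₂, b1 :: e₁, ρ, e₂, by simp [h1], h2, YTrans.t6 h3, h4, by simp [h5]⟩

----------------- pointed decompositions ------------------

lemma uniq : ∀ (E E' : List YSym) (σ σ' : YSym) (F F' : List YSym),
    E ++ σ :: F = E' ++ σ' :: F' → isY σ = true → isY σ' = true →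
    cY E = cY E' → E = E' ∧ σ = σ' ∧ F = F' := by
  intro E
  induction E with
  | nil =>
    intro E' σ σ' F F' heq hσ hσ' hcount
    cases E' with
    | nil => simpa using heq
    | cons a E'' =>
      exfalso
      obtain ⟨rfl, -⟩ : σ = a ∧ F = E'' ++ σ' :: F' := by simpa using heq
      have : cY (σ :: E'') = 0 := hcount.symm
      simp [List.countP_cons, hσ] at this
  | cons a E₁ ih =>
    intro E' σ σ' F F' heq hσ hσ' hcount
    cases E' with
    | nil =>
      exfalso
      obtain ⟨rfl, -⟩ : a = σ' ∧ E₁ ++ σ :: F = F' := by simpa using heq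
      have : cY (a :: E₁) = 0 := hcount
      simp [List.countP_cons, hσ'] at this
    | cons a' E₁' =>
      obtain ⟨rfl, heq'⟩ : a = a' ∧ E₁ ++ σ :: F = E₁' ++ σ' :: F' := by simpa using heq
      have hc : cY E₁ = cY E₁' := by
        have := hcount
        simp only [cY, List.countP_cons] at this ⊢
        omega
      obtain ⟨rfl, rfl, rfl⟩ := ih E₁' σ σ' F F' heq' hσ hσ' hc
      exact ⟨rfl, rfl, rfl⟩

lemma left_split {E : List YSym} {σ : YSym} {F u X : List YSym}
    (h : E ++ σ :: F = u ++ X) (hlt : cY E < cY u) :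
    ∃ G, u = E ++ σ :: G ∧ F = G ++ X := by
  have h' : (E ++ [σ]) ++ F = u ++ X := by simpa using h
  rcases List.append_eq_append_iff.mp h' with ⟨t, ht1, ht2⟩ | ⟨t, ht1, ht2⟩
  · exact ⟨t, by simpa using ht1, ht2⟩
  · -- E ++ [σ] = u ++ t, X = t ++ F
    rcases List.append_eq_append_iff.mp ht1 with ⟨t', hu, hσt⟩ | ⟨t', hE, ht⟩
    · -- u = E ++ t', [σ] = t' ++ t
      match t', hσt with
      | [], hσt =>
        exfalso
        rw [hu] at hlt; simp at hlt
      | [x], hσt =>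
        obtain ⟨rfl, rfl⟩ : σ = x ∧ t = [] := by simpa using hσt
        refine ⟨[], by simpa using hu, by have := ht2; simp at this; simp [this]⟩
    · -- E = u ++ t'
      exfalso
      rw [hE] at hlt
      simp [List.countP_append] at hlt
      all_goals omega

lemma right_split {P v E : List YSym} {σ : YSym} {F : List YSym}
    (h : P ++ v = E ++ σ :: F) (hle : cY P ≤ cY E) (hσ : isY σ = true) :
    ∃ E₂, E = P ++ E₂ ∧ v = E₂ ++ σ :: F := by
  rcases List.append_eq_append_iff.mp h with ⟨t, ht1, ht2⟩ | ⟨t, ht1, ht2⟩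
  · exact ⟨t, ht1, ht2⟩
  · -- P = E ++ t, σ :: F = t ++ v
    match t, ht2 with
    | [], ht2 =>
      refine ⟨[], by simpa using ht1.symm, by simpa using ht2.symm⟩
    | x :: t', ht2 =>
      exfalso
      obtain ⟨rfl, -⟩ : σ = x ∧ F = t' ++ v := by simpa using ht2
      rw [ht1] at hle
      simp [List.countP_append, List.countP_cons, hσ] at hle
      all_goals omega

lemma bits_split {C F' D : List YSym} {s' : YSym} {v : List YSym}
    (h : C ++ F' = D ++ s' :: v) (hC : AllB C) (hs' : isY s' = true) :
    ∃ R, D = C ++ R ∧ F' = R ++ s' :: v := by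
  rcases List.append_eq_append_iff.mp h with ⟨t, ht1, ht2⟩ | ⟨t, ht1, ht2⟩
  · exact ⟨t, ht1, ht2⟩
  · match t, ht2 with
    | [], ht2 => exact ⟨[], by simpa using ht1.symm, by simpa using ht2.symm⟩
    | x :: t', ht2 =>
      exfalso
      obtain ⟨rfl, -⟩ : s' = x ∧ v = t' ++ F' := by simpa using ht2
      have : isY s' = false := hC s' (by simp [ht1])
      rw [hs'] at this; simp at this

----------------- advancement vs transducer ------------------

lemma adv_first {j : ℕ} {z z₂ : List YSym} (h : AdvanceAt j z z₂) :
    ∃ E σ F, z = E ++ σ :: F ∧ isY σ = true ∧ cY E = j := by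
  obtain ⟨U, l, r, V, hr, hzeq, -, hU⟩ := h
  cases hr with
  | r1 => exact ⟨U, yp, b0 :: b0 :: V, by simpa using hzeq, rfl, hU⟩
  | r2 => exact ⟨U, yp, b0 :: b1 :: V, by simpa using hzeq, rfl, hU⟩
  | r3 => exact ⟨U, yp, b1 :: V, by simpa using hzeq, rfl, hU⟩
  | r4 => exact ⟨U, ym, b0 :: V, by simpa using hzeq, rfl, hU⟩
  | r5 => exact ⟨U, ym, b1 :: b0 :: V, by simpa using hzeq, rfl, hU⟩
  | r6 => exact ⟨U, ym, b1 :: b1 :: V, by simpa using hzeq, rfl, hU⟩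

lemma adv_decomp {j : ℕ} {z z₂ : List YSym} (h : AdvanceAt j z z₂) :
    ∀ E σ F, z = E ++ σ :: F → isY σ = true → cY E = j →
    ∃ C e τ F', F = C ++ F' ∧ YTrans σ C e τ ∧ z₂ = E ++ e ++ τ :: F' := by
  obtain ⟨U, l, r, V, hr, hzeq, hz2, hU⟩ := h
  intro E σ F hz hσ hE
  cases hr with
  | r1 =>
    obtain ⟨rfl, rfl, rfl⟩ := uniq E U σ yp F (b0 :: b0 :: V)
      (by rw [← hz]; simpa using hzeq) hσ rfl (by rw [hE, ← hU])
    exact ⟨[b0, b0], [b0], yp, V, rfl, YTrans.t1 (YTrans.nil yp), by simpa using hz2⟩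
  | r2 =>
    obtain ⟨rfl, rfl, rfl⟩ := uniq E U σ yp F (b0 :: b1 :: V)
      (by rw [← hz]; simpa using hzeq) hσ rfl (by rw [hE, ← hU])
    exact ⟨[b0, b1], [b1, b0], ym, V, rfl, YTrans.t2 (YTrans.nil ym), by simpa using hz2⟩
  | r3 =>
    obtain ⟨rfl, rfl, rfl⟩ := uniq E U σ yp F (b1 :: V)
      (by rw [← hz]; simpa using hzeq) hσ rfl (by rw [hE, ← hU])
    exact ⟨[b1], [b1, b1], yp, V, rfl, YTrans.t3 (YTrans.nil yp), by simpa using hz2⟩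
  | r4 =>
    obtain ⟨rfl, rfl, rfl⟩ := uniq E U σ ym F (b0 :: V)
      (by rw [← hz]; simpa using hzeq) hσ rfl (by rw [hE, ← hU])
    exact ⟨[b0], [b0, b0], ym, V, rfl, YTrans.t4 (YTrans.nil ym), by simpa using hz2⟩
  | r5 =>
    obtain ⟨rfl, rfl, rfl⟩ := uniq E U σ ym F (b1 :: b0 :: V)
      (by rw [← hz]; simpa using hzeq) hσ rfl (by rw [hE, ← hU])
    exact ⟨[b1, b0], [b0, b1], yp, V, rfl, YTrans.t5 (YTrans.nil yp), by simpa using hz2⟩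
  | r6 =>
    obtain ⟨rfl, rfl, rfl⟩ := uniq E U σ ym F (b1 :: b1 :: V)
      (by rw [← hz]; simpa using hzeq) hσ rfl (by rw [hE, ← hU])
    exact ⟨[b1, b1], [b1], ym, V, rfl, YTrans.t6 (YTrans.nil ym), by simpa using hz2⟩

lemma chain_decomp {j : ℕ} {z z'' : List YSym}
    (h : Relation.ReflTransGen (AdvanceAt j) z z'') :
    ∀ E σ F, z = E ++ σ :: F → isY σ = true → cY E = j →
    ∃ C e τ F', F = C ++ F' ∧ YTrans σ C e τ ∧ z'' = E ++ e ++ τ :: F' := by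
  induction h using Relation.ReflTransGen.head_induction_on with
  | refl =>
    intro E σ F hz hσ hE
    exact ⟨[], [], σ, F, rfl, YTrans.nil σ, by simpa using hz⟩
  | head h' _ ih =>
    intro E σ F hz hσ hE
    obtain ⟨C₁, e₁, τ₁, F₁, hF1, ht1, hc⟩ := adv_decomp h' E σ F hz hσ hE
    have he₁ : cY e₁ = 0 := cY_allB (trans_allB ht1).2
    obtain ⟨C₂, e₂, τ, F', hF2, ht2, hz''⟩ := ih (E ++ e₁) τ₁ F₁
      (by simpa using hc) (trans_isY ht1 hσ)
      (by simp [List.countP_append, hE]; simpa using he₁)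
    exact ⟨C₁ ++ C₂, e₁ ++ e₂, τ, F', by simp [hF1, hF2], trans_comp ht1 ht2,
      by simpa [List.append_assoc] using hz''⟩

lemma chain_back {σ : YSym} {C e : List YSym} {τ : YSym} (h : YTrans σ C e τ) :
    ∀ E X : List YSym,
      Relation.ReflTransGen (AdvanceAt (cY E)) (E ++ σ :: (C ++ X)) (E ++ e ++ τ :: X) := by
  induction h with
  | nil σ => intro E X; simp; exact Relation.ReflTransGen.refl
  | t1 h ih =>
    rename_i t e' τ'
    intro E X
    refine Relation.ReflTransGen.head
      ⟨E, [yp, b0, b0], [b0, yp], t ++ X, Rule.r1, by simp, rfl, rfl⟩ ?_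
    have := ih (E ++ [b0]) X
    simp only [List.countP_append] at this ⊢
    simpa [cY, List.append_assoc, List.countP_cons, isY] using this
  | t2 h ih =>
    rename_i t e' τ'
    intro E X
    refine Relation.ReflTransGen.head
      ⟨E, [yp, b0, b1], [b1, b0, ym], t ++ X, Rule.r2, by simp, rfl, rfl⟩ ?_
    have := ih (E ++ [b1, b0]) X
    simpa [cY, List.append_assoc, List.countP_append, List.countP_cons, isY] using this
  | t3 h ih =>
    rename_i t e' τ'
    intro E X
    refine Relation.ReflTransGen.head
      ⟨E, [yp, b1], [b1, b1, yp], t ++ X, Rule.r3, by simp, rfl, rfl⟩ ?_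
    have := ih (E ++ [b1, b1]) X
    simpa [cY, List.append_assoc, List.countP_append, List.countP_cons, isY] using this
  | t4 h ih =>
    rename_i t e' τ'
    intro E X
    refine Relation.ReflTransGen.head
      ⟨E, [ym, b0], [b0, b0, ym], t ++ X, Rule.r4, by simp, rfl, rfl⟩ ?_
    have := ih (E ++ [b0, b0]) X
    simpa [cY, List.append_assoc, List.countP_append, List.countP_cons, isY] using this
  | t5 h ih =>
    rename_i t e' τ'
    intro E X
    refine Relation.ReflTransGen.head
      ⟨E, [ym, b1, b0], [b0, b1, yp], t ++ X, Rule.r5, by simp, rfl, rfl⟩ ?_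
    have := ih (E ++ [b0, b1]) X
    simpa [cY, List.append_assoc, List.countP_append, List.countP_cons, isY] using this
  | t6 h ih =>
    rename_i t e' τ'
    intro E X
    refine Relation.ReflTransGen.head
      ⟨E, [ym, b1, b1], [b1, ym], t ++ X, Rule.r6, by simp, rfl, rfl⟩ ?_
    have := ih (E ++ [b1]) X
    simpa [cY, List.append_assoc, List.countP_append, List.countP_cons, isY] using this

----------------- the master lemma ------------------

lemma master (s s' : YSym) (bl br : List YSym)
    (hrule : Rule (s :: bl) (br ++ [s']))
    (hsY : isY s = true) (hs'Y : isY s' = true)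
    (hbrB : AllB br) (hblB : AllB bl) (hbrne : br ≠ [])
    (core1 : ∀ e τ, YTrans s br e τ → τ = s')
    (core2 : ∀ e τ, YTrans YSym.yp (YSym.b0 :: br) e τ → τ = s')
    (core3 : ∀ e τ, YTrans YSym.ym (YSym.b1 :: br) e τ → τ = s')
    (u v : List YSym) (i : ℕ) (hu : cY u = i)
    (hw : ∀ j, ¬ PotentialCancellation j (u ++ (s :: bl) ++ v)) :
    ∀ j, ¬ PotentialCancellation j (u ++ (br ++ [s']) ++ v) := by
  intro j hpc
  set w : List YSym := u ++ (s :: bl) ++ v with hw_def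
  set w' : List YSym := u ++ (br ++ [s']) ++ v with hw'_def
  have hstep : AdvanceAt i w w' := ⟨u, _, _, v, hrule, rfl, rfl, hu⟩
  obtain ⟨w'', hchain, hcanc⟩ := hpc
  have HC' : ¬ HasCancel w' := fun h => hw i ⟨w', Relation.ReflTransGen.single hstep, h⟩
  have HCsv : ¬ HasCancel (s' :: v) := fun h => HC' (by
    have hsh : w' = (u ++ br) ++ (s' :: v) := by simp [hw'_def]
    rw [hsh]; exact hc_mono_right h)
  rcases Relation.ReflTransGen.cases_head hchain with rfl | ⟨z₁, h₁, -⟩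
  · exact HC' hcanc
  obtain ⟨E, σ, F, hEsp, hσY, hEj⟩ := adv_first h₁
  obtain ⟨C, e, τ, F', hF, htr, hw''⟩ := chain_decomp hchain E σ F hEsp hσY hEj
  have hCB := (trans_allB htr).1
  have heB := (trans_allB htr).2
  have hτY : isY τ = true := trans_isY htr hσY
  rcases lt_trichotomy j i with hji | rfl | hij
  ·  -- ===================== CASE j < i =====================
    obtain ⟨G, huG, hFG⟩ := left_split (u := u) (X := br ++ s' :: v)
      (by rw [← hEsp]; simp [hw'_def]) (by rw [hEj, hu]; exact hji)
    have hCF : C ++ F' = (G ++ br) ++ s' :: v := by rw [← hF, hFG]; simp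
    obtain ⟨R, hGbr, hF'⟩ := bits_split hCF hCB hs'Y
    -- key handles runs that stay inside G (i.e. C is a prefix of G)
    have key : ∀ D : List YSym, G = C ++ D → R = D ++ br → False := by
      intro D hGD hRD
      have hchain_w : Relation.ReflTransGen (AdvanceAt j) w
          (E ++ e ++ τ :: (D ++ s :: bl ++ v)) := by
        have hcb := chain_back htr E (D ++ s :: bl ++ v)
        rw [hEj] at hcb
        have hwe : w = E ++ σ :: (C ++ (D ++ s :: bl ++ v)) := by
          simp [hw_def, huG, hGD]
        rwa [← hwe] at hcb
      have hnz : ¬ HasCancel (E ++ e ++ τ :: (D ++ s :: bl ++ v)) :=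
        fun h => hw j ⟨_, hchain_w, h⟩
      have hc2 : HasCancel ((E ++ e ++ τ :: D) ++ (br ++ s' :: v)) := by
        have hre : w'' = (E ++ e ++ τ :: D) ++ (br ++ s' :: v) := by
          simp [hw'', hF', hRD]
        rwa [hre] at hcanc
      rcases hc_split hc2 with hA | hB | ⟨a, b, A', B', hcp, hA, hB⟩
      · refine hnz ?_
        have hre : E ++ e ++ τ :: (D ++ s :: bl ++ v)
            = (E ++ e ++ τ :: D) ++ (s :: bl ++ v) := by simp
        rw [hre]; exact hc_mono_left hA
      · rcases hc_split hB with hB1 | hB2 | ⟨a, b, A', B', hcp, hA2, hB2⟩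
        · exact no_hc_allB hbrB hB1
        · exact HCsv hB2
        · exact absurd (cpair_isY hcp).1 (by simp [hbrB a (by simp [hA2])])
      · cases br with
        | nil => exact hbrne rfl
        | cons c br' =>
          obtain ⟨hcb, -⟩ : c = b ∧ br' ++ s' :: v = B' := by simpa using hB
          exact absurd (cpair_isY hcp).2 (by simp [← hcb, hbrB c (by simp)])
    rcases List.append_eq_append_iff.mp hGbr with ⟨C₂, hC2, hbr2⟩ | ⟨D, hGD, hRD⟩
    swap
    · exact key D hGD hRD
    by_cases hC₂ : C₂ = []
    · subst hC₂
      have hCG : C = G := by simpa using hC2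
      exact key [] (by simp [hCG]) (by simpa using hbr2.symm)
    -- ===== the run has entered the br region =====
    obtain ⟨G₁, G₂, e₁, σ₁, e₂, hG12, hlen, htr1, htr2, he12⟩ := trans_split htr G C₂ hC2
    have hσ₁Y : isY σ₁ = true := trans_isY htr1 hσY
    have he₂B : AllB e₂ := (trans_allB htr2).2
    have he₂ne : e₂ ≠ [] := trans_ne htr2 (by
      intro h; rcases List.append_eq_nil_iff.mp h with ⟨-, h2⟩; exact hC₂ h2)
    have hchain1 : Relation.ReflTransGen (AdvanceAt j) w
        (E ++ e₁ ++ σ₁ :: (G₂ ++ s :: bl ++ v)) := by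
      have hcb := chain_back htr1 E (G₂ ++ s :: bl ++ v)
      rw [hEj] at hcb
      have hwe : w = E ++ σ :: (G₁ ++ (G₂ ++ s :: bl ++ v)) := by
        simp [hw_def, huG, hG12]
      rwa [← hwe] at hcb
    have hnz1 : ¬ HasCancel (E ++ e₁ ++ σ₁ :: (G₂ ++ s :: bl ++ v)) :=
      fun h => hw j ⟨_, hchain1, h⟩
    have hc3 : HasCancel ((E ++ e₁) ++ ((e₂ ++ τ :: R) ++ (s' :: v))) := by
      have hre : w'' = (E ++ e₁) ++ ((e₂ ++ τ :: R) ++ (s' :: v)) := by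
        simp [hw'', hF', he12]
      rwa [hre] at hcanc
    have hRB : AllB R := fun x hx => hbrB x (by rw [hbr2]; exact List.mem_append_right _ hx)
    rcases hc_split hc3 with hA | hB | ⟨a, b, A', B', hcp, hA, hB⟩
    · refine hnz1 ?_
      have hre : E ++ e₁ ++ σ₁ :: (G₂ ++ s :: bl ++ v)
          = (E ++ e₁) ++ (σ₁ :: (G₂ ++ s :: bl ++ v)) := by simp
      rw [hre]; exact hc_mono_left hA
    · rcases hc_split hB with hB1 | hB2 | ⟨a, b, A', B', hcp, hA2, hB2⟩
      · -- HasCancel (e₂ ++ τ :: R)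
        rcases hc_split hB1 with hX | hX | ⟨a, b, A', B', hcp, hA3, hB3⟩
        · exact no_hc_allB he₂B hX
        · rcases hc_split (show HasCancel ([τ] ++ R) by simpa using hX)
            with hY | hY | ⟨a, b, A', B', hcp, hA4, hB4⟩
          · exact no_hc_single τ hY
          · exact no_hc_allB hRB hY
          · rcases R with _ | ⟨r0, R'⟩
            · simp at hB4
            · obtain ⟨hrb, -⟩ : r0 = b ∧ R' = B' := by simpa using hB4
              exact absurd (cpair_isY hcp).2 (by simp [← hrb, hRB r0 (by simp)])
        · exact absurd (cpair_isY hcp).1 (by simp [he₂B a (by rw [hA3]; simp)])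
      · exact HCsv hB2
      · -- straddle (e₂ ++ τ :: R) / (s' :: v)
        obtain ⟨hbs, -⟩ : s' = b ∧ v = B' := by simpa using hB2
        rcases List.eq_nil_or_concat R with rfl | ⟨R₀, x, hR⟩
        · -- R = [] : the run consumed all of br; a = τ and we need τ = s'
          have haτ : a = τ := by
            have h5 : e₂ ++ [τ] = A' ++ [a] := by simpa using hA2
            have := (List.append_inj' h5 rfl).2
            injection this with h6
            exact h6.symm
          have hC₂br : C₂ = br := by simpa using hbr2.symm
          rw [hC₂br] at htr2
          -- show τ = s'
          have hτs' : τ = s' := by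
            rcases G₂ with _ | ⟨g, G₂'⟩
            · -- G₂ = [] : occurrence j was adjacent to the advanced occurrence in w
              have hσ₁s : σ₁ = s := by
                refine eq_of_not_cpair hσ₁Y hsY (fun hcp' => hnz1 ?_)
                have hre : E ++ e₁ ++ σ₁ :: ([] ++ s :: bl ++ v)
                    = (E ++ e₁) ++ σ₁ :: s :: (bl ++ v) := by simp
                rw [hre]; exact hc_of_cpair hcp' _ _
              rw [← hσ₁s] at core1
              exact core1 e₂ τ (by simpa using htr2)
            · have hG₂' : G₂' = [] := by
                cases G₂' with
                | nil => rfl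
                | cons _ _ => simp at hlen
              subst hG₂'
              have hgB : isY g = false := hCB g (by
                rw [hC2]; exact List.mem_append_left _ (by rw [hG12]; simp))
              rcases notY_cases hgB with rfl | rfl
              · -- pending bit 0
                rcases isY_cases hσ₁Y with rfl | rfl
                · exact core2 e₂ τ (by simpa using htr2)
                · -- σ₁ = ym : the step on 0 is forced, reduce to the adjacent case
                  have htr2' : YTrans YSym.ym (YSym.b0 :: br) e₂ τ := by simpa using htr2
                  cases htr2' with
                  | t4 hinner =>
                    -- extend the w-side run by the forced step
                    have htr1' : YTrans σ (G₁ ++ [YSym.b0]) (e₁ ++ [YSym.b0, YSym.b0]) YSym.ym :=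
                      trans_comp htr1 (YTrans.t4 (YTrans.nil YSym.ym))
                    have hchain2 : Relation.ReflTransGen (AdvanceAt j) w
                        ((E ++ (e₁ ++ [YSym.b0, YSym.b0])) ++ YSym.ym :: s :: (bl ++ v)) := by
                      have hcb := chain_back htr1' E (s :: bl ++ v)
                      rw [hEj] at hcb
                      have hwe : w = E ++ σ :: ((G₁ ++ [YSym.b0]) ++ (s :: bl ++ v)) := by
                        simp [hw_def, huG, hG12]
                      rw [← hwe] at hcb
                      have hre : E ++ (e₁ ++ [YSym.b0, YSym.b0]) ++ YSym.ym :: (s :: bl ++ v)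
                          = (E ++ (e₁ ++ [YSym.b0, YSym.b0])) ++ YSym.ym :: s :: (bl ++ v) := by simp
                      rwa [← hre]
                    have hs_eq : s = YSym.ym := by
                      refine (eq_of_not_cpair (show isY YSym.ym = true from rfl) hsY
                        (fun hcp' => hw j ⟨_, hchain2, ?_⟩)).symm
                      exact hc_of_cpair hcp' _ _
                    rw [hs_eq] at core1
                    exact core1 _ τ hinner
              · -- pending bit 1
                rcases isY_cases hσ₁Y with rfl | rfl
                · -- σ₁ = yp : the step on 1 is forced
                  have htr2' : YTrans YSym.yp (YSym.b1 :: br) e₂ τ := by simpa using htr2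
                  cases htr2' with
                  | t3 hinner =>
                    have htr1' : YTrans σ (G₁ ++ [YSym.b1]) (e₁ ++ [YSym.b1, YSym.b1]) YSym.yp :=
                      trans_comp htr1 (YTrans.t3 (YTrans.nil YSym.yp))
                    have hchain2 : Relation.ReflTransGen (AdvanceAt j) w
                        ((E ++ (e₁ ++ [YSym.b1, YSym.b1])) ++ YSym.yp :: s :: (bl ++ v)) := by
                      have hcb := chain_back htr1' E (s :: bl ++ v)
                      rw [hEj] at hcb
                      have hwe : w = E ++ σ :: ((G₁ ++ [YSym.b1]) ++ (s :: bl ++ v)) := by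
                        simp [hw_def, huG, hG12]
                      rw [← hwe] at hcb
                      have hre : E ++ (e₁ ++ [YSym.b1, YSym.b1]) ++ YSym.yp :: (s :: bl ++ v)
                          = (E ++ (e₁ ++ [YSym.b1, YSym.b1])) ++ YSym.yp :: s :: (bl ++ v) := by simp
                      rwa [← hre]
                    have hs_eq : s = YSym.yp := by
                      refine (eq_of_not_cpair (show isY YSym.yp = true from rfl) hsY
                        (fun hcp' => hw j ⟨_, hchain2, ?_⟩)).symm
                      exact hc_of_cpair hcp' _ _
                    rw [hs_eq] at core1
                    exact core1 _ τ hinner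
                · exact core3 e₂ τ (by simpa using htr2)
          rw [haτ, hτs', hbs] at hcp
          exact not_cpair_self b hcp
        · -- R ends in a bit
          have hax : a = x := by
            rw [hR] at hA2
            have h5 : (e₂ ++ τ :: R₀) ++ [x] = A' ++ [a] := by rw [← hA2]; simp
            have := (List.append_inj' h5 rfl).2
            injection this with h6
            exact h6.symm
          exact absurd (cpair_isY hcp).1 (by simp [hax, hRB x (by rw [hR]; simp)])
    · -- straddle (E ++ e₁) / rest : head of e₂ is a bit
      rcases e₂ with _ | ⟨c, e₂'⟩
      · exact he₂ne rfl
      · obtain ⟨hcb, -⟩ : c = b ∧ (e₂' ++ τ :: R) ++ s' :: v = B' := by simpa using hB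
        exact absurd (cpair_isY hcp).2 (by simp [← hcb, he₂B c (by simp)])
  · -- ===================== CASE j = i =====================
    obtain ⟨hEq, hs'σ, hvF⟩ := uniq (u ++ br) E s' σ v F
      (by rw [← hEsp]; simp [hw'_def])
      hs'Y hσY (by rw [hEj]; simp [List.countP_append, hu, cY_allB hbrB])
    have hch2 : Relation.ReflTransGen (AdvanceAt j) w' w'' := by
      have hcb := chain_back htr (u ++ br) F'
      rw [show cY (u ++ br) = j by simp [List.countP_append, hu, cY_allB hbrB]] at hcb
      have hw'e : w' = (u ++ br) ++ σ :: (C ++ F') := by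
        rw [hw'_def]
        simp only [List.append_assoc]
        rw [← hs'σ, ← hF, hvF]
        simp
      rw [← hw'e] at hcb
      rwa [hw'', ← hEq]
    exact hw j ⟨w'', Relation.ReflTransGen.head hstep hch2, hcanc⟩
  · -- ===================== CASE j > i =====================
    obtain ⟨E₂, hEE, hvE⟩ := right_split (P := u ++ br ++ [s']) (v := v)
      (by rw [← hEsp]; simp [hw'_def])
      (by rw [hEj]
          simp [List.countP_append, hu, cY_allB hbrB, List.countP_cons, hs'Y]
          omega) hσY
    have hcnt : cY (u ++ s :: bl ++ E₂) = j := by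
      have h7 : cY E = j := hEj
      rw [hEE] at h7
      simp only [cY, List.countP_append, List.countP_cons] at h7 ⊢
      simp only [cY_allB hbrB, cY_allB hblB, hu, hsY, hs'Y, List.countP_nil, if_true] at h7 ⊢
      omega
    have hchain3 : Relation.ReflTransGen (AdvanceAt j) w
        ((u ++ s :: bl ++ E₂) ++ e ++ τ :: F') := by
      have hcb := chain_back htr (u ++ s :: bl ++ E₂) F'
      rw [hcnt] at hcb
      have hwe : w = (u ++ s :: bl ++ E₂) ++ σ :: (C ++ F') := by
        simp [hw_def, hvE, ← hF]
      rwa [← hwe] at hcb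
    have hnz3 : ¬ HasCancel ((u ++ s :: bl ++ E₂) ++ e ++ τ :: F') :=
      fun h => hw j ⟨_, hchain3, h⟩
    have hc4 : HasCancel (u ++ (br ++ (s' :: (E₂ ++ e ++ τ :: F')))) := by
      have hre : w'' = u ++ (br ++ (s' :: (E₂ ++ e ++ τ :: F'))) := by
        simp [hw'', hEE]
      rwa [hre] at hcanc
    rcases hc_split hc4 with hA | hB | ⟨a, b, A', B', hcp, hA, hB⟩
    · refine hnz3 ?_
      have hre : (u ++ s :: bl ++ E₂) ++ e ++ τ :: F'
          = u ++ ((s :: bl ++ E₂) ++ e ++ τ :: F') := by simp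
      rw [hre]; exact hc_mono_left hA
    · rcases hc_split hB with hB1 | hB2 | ⟨a, b, A', B', hcp, hA2, hB2⟩
      · exact no_hc_allB hbrB hB1
      · -- HasCancel (s' :: M)
        rcases hc_split (show HasCancel ([s'] ++ (E₂ ++ e ++ τ :: F')) by simpa using hB2)
          with hY | hY | ⟨a, b, A', B', hcp, hA3, hB3⟩
        · exact no_hc_single s' hY
        · refine hnz3 ?_
          have hre : (u ++ s :: bl ++ E₂) ++ e ++ τ :: F'
              = (u ++ s :: bl) ++ (E₂ ++ e ++ τ :: F') := by simp
          rw [hre]; exact hc_mono_right hY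
        · -- straddle s' / head of M
          have has' : a = s' := by
            have h5 : ([] : List YSym) ++ [s'] = A' ++ [a] := by simpa using hA3
            have := (List.append_inj' h5 rfl).2
            injection this with h6
            exact h6.symm
          rcases E₂ with _ | ⟨m, E₂'⟩
          · rcases e with _ | ⟨c, e'⟩
            · -- empty run : the pair (s', σ) was already present in w'
              obtain ⟨hC0, hτσ⟩ := trans_e_nil htr
              have hbτ : b = τ := by
                have := hB3; simp at this; exact this.1.symm
              refine HC' ?_
              have hre : w' = (u ++ br) ++ s' :: σ :: F := by
                rw [hw'_def]
                simp only [List.append_assoc]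
                rw [hvE]
                simp
              rw [hre]
              exact hc_of_cpair (by rw [← hτσ, ← hbτ, ← has']; exact hcp) _ _
            · -- head of e is a bit
              have hbc : b = c := by
                have := hB3; simp at this; exact this.1.symm
              exact absurd (cpair_isY hcp).2 (by simp [hbc, heB c (by simp)])
          · -- head of E₂ : this pair was already present in w'
            have hbm : b = m := by
              have := hB3; simp at this; exact this.1.symm
            refine HC' ?_
            have hre : w' = (u ++ br) ++ s' :: m :: (E₂' ++ σ :: F) := by
              rw [hw'_def]
              simp only [List.append_assoc]
              rw [hvE]
              simp
            rw [hre]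
            exact hc_of_cpair (by rw [← hbm, ← has']; exact hcp) _ _
      · -- straddle br / (s' :: M) : last of br is a bit
        exact absurd (cpair_isY hcp).1 (by simp [hbrB a (by rw [hA2]; simp)])
    · -- straddle u / rest : head of br is a bit
      cases br with
      | nil => exact hbrne rfl
      | cons c br' =>
        have hbc : b = c := by
          have := hB; simp at this; exact this.1.symm
        exact absurd (cpair_isY hcp).2 (by simp [hbc, hbrB c (by simp)])

/-- advancing any single occurrence of y± in a word with no potential
cancellations results in a word with no potential cancellations. -/
theorem advance_preserves_no_potential_cancellation
    (w w' : List YSym) (i : ℕ)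
    (hw : ∀ j, ¬ PotentialCancellation j w)
    (hstep : AdvanceAt i w w') :
    ∀ j, ¬ PotentialCancellation j w' := by
  obtain ⟨u, l, r, v, hrule, hweq, hw'eq, hu⟩ := hstep
  subst hweq; subst hw'eq
  cases hrule with
  | r1 =>
    exact master YSym.yp YSym.yp [YSym.b0, YSym.b0] [YSym.b0] Rule.r1 rfl rfl
      (by simp [AllB, isY]) (by simp [AllB, isY]) (by simp)
      (by intro e τ h; have h2 := trans_run h; simp [run] at h2)
      (by intro e τ h; have h2 := trans_run h; simp [run] at h2;
          first | exact h2.2 | exact h2.2.symm)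
      (by intro e τ h; have h2 := trans_run h; simp [run] at h2;
          first | exact h2.2 | exact h2.2.symm)
      u v i hu hw
  | r2 =>
    exact master YSym.yp YSym.ym [YSym.b0, YSym.b1] [YSym.b1, YSym.b0] Rule.r2 rfl rfl
      (by simp [AllB, isY]) (by simp [AllB, isY]) (by simp)
      (by intro e τ h; have h2 := trans_run h; simp [run] at h2)
      (by intro e τ h; have h2 := trans_run h; simp [run] at h2;
          first | exact h2.2 | exact h2.2.symm)
      (by intro e τ h; have h2 := trans_run h; simp [run] at h2;
          first | exact h2.2 | exact h2.2.symm)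
      u v i hu hw
  | r3 =>
    exact master YSym.yp YSym.yp [YSym.b1] [YSym.b1, YSym.b1] Rule.r3 rfl rfl
      (by simp [AllB, isY]) (by simp [AllB, isY]) (by simp)
      (by intro e τ h; have h2 := trans_run h; simp [run] at h2;
          first | exact h2.2 | exact h2.2.symm)
      (by intro e τ h; have h2 := trans_run h; simp [run] at h2)
      (by intro e τ h; have h2 := trans_run h; simp [run] at h2)
      u v i hu hw
  | r4 =>
    exact master YSym.ym YSym.ym [YSym.b0] [YSym.b0, YSym.b0] Rule.r4 rfl rfl
      (by simp [AllB, isY]) (by simp [AllB, isY]) (by simp)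
      (by intro e τ h; have h2 := trans_run h; simp [run] at h2;
          first | exact h2.2 | exact h2.2.symm)
      (by intro e τ h; have h2 := trans_run h; simp [run] at h2)
      (by intro e τ h; have h2 := trans_run h; simp [run] at h2)
      u v i hu hw
  | r5 =>
    exact master YSym.ym YSym.yp [YSym.b1, YSym.b0] [YSym.b0, YSym.b1] Rule.r5 rfl rfl
      (by simp [AllB, isY]) (by simp [AllB, isY]) (by simp)
      (by intro e τ h; have h2 := trans_run h; simp [run] at h2)
      (by intro e τ h; have h2 := trans_run h; simp [run] at h2;
          first | exact h2.2 | exact h2.2.symm)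
      (by intro e τ h; have h2 := trans_run h; simp [run] at h2;
          first | exact h2.2 | exact h2.2.symm)
      u v i hu hw
  | r6 =>
    exact master YSym.ym YSym.ym [YSym.b1, YSym.b1] [YSym.b1] Rule.r6 rfl rfl
      (by simp [AllB, isY]) (by simp [AllB, isY]) (by simp)
      (by intro e τ h; have h2 := trans_run h; simp [run] at h2)
      (by intro e τ h; have h2 := trans_run h; simp [run] at h2;
          first | exact h2.2 | exact h2.2.symm)
      (by intro e τ h; have h2 := trans_run h; simp [run] at h2;
          first | exact h2.2 | exact h2.2.symm)
      u v i hu hw
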